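/- The dual Cauchy-type specialization: Σ_{|λ|=n} m_λ(1, z₂, z₂², ...) h_λ(1, z₁, z₁², ...) = Σ_μ z₂^{|μ|} / b_{μ,n}(z₁), where the right sum runs over partitions μ with at most n parts and b_{μ,n}(z) = ∏_{i ≥ 0} [m_i(μ)]_z with m_0(μ) = n - ℓ(μ) and [k]_z = ∏_{j=1}^k (1 - z^j). -/

import Mathlib

open PowerSeries

/-- The specialization `h_k(1, z, z², ...)` of the complete homogeneous symmetric
function: the coefficient of `z^N` counts multisets of exponents (one exponent
`i ≥ 0` for each of the `k` chosen variables `x_{i+1} = z^i`) of size `k`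
summing to `N`. -/
noncomputable def specH (k : ℕ) : PowerSeries ℤ :=
  PowerSeries.mk fun N => (Set.ncard {S : Multiset ℕ | Multiset.card S = k ∧ S.sum = N} : ℤ)

/-- The specialization `m_λ(1, z, z², ...)` of the monomial symmetric function:
the sum of `z^{Σ i·α_i}` over all distinct exponent sequences `α` whose multiset
of nonzero values equals the parts of `λ`. -/
noncomputable def specM (lam : Multiset ℕ) : PowerSeries ℤ :=
  PowerSeries.mk fun N => (Set.ncard {α : ℕ →₀ ℕ |
    Multiset.map α α.support.val = lam ∧ (α.sum fun i a => i * a) = N} : ℤ)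

/-- `[k]_z = ∏_{1 ≤ j ≤ k} (1 - z^j)`. -/
noncomputable def qfac (k : ℕ) : PowerSeries ℤ :=
  ∏ j ∈ Finset.range k, (1 - (PowerSeries.X : PowerSeries ℤ) ^ (j + 1))

/-- `h_λ(1,z,z²,...) = ∏_k h_{λ_k}(1,z,z²,...)`. -/
noncomputable def specHMulti (lam : Multiset ℕ) : PowerSeries ℤ :=
  (lam.map specH).prod

/-- `b_{μ,n}(z) = ∏_{i ≥ 0} [m_i(μ)]_z`, with `m_0(μ) = n - ℓ(μ)`, for a
partition `μ` with positive parts and at most `n` of them. -/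
noncomputable def bpol (n : ℕ) (μ : Multiset ℕ) : PowerSeries ℤ :=
  qfac (n - Multiset.card μ) * (Multiset.map (fun i => qfac (μ.count i)) μ.toFinset.val).prod

/-- The inverse `b_{μ,n}(z)⁻¹` (the constant term of `b_{μ,n}` is `1`). -/
noncomputable def bpolInv (n : ℕ) (μ : Multiset ℕ) : PowerSeries ℤ :=
  PowerSeries.invOfUnit (bpol n μ) 1

def Mset (k N : ℕ) : Set (Multiset ℕ) := {S | Multiset.card S = k ∧ S.sum = N}

lemma Mset_finite (k N : ℕ) : (Mset k N).Finite := by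
  apply Set.Finite.subset ((k • Multiset.range (N+1)).powerset.toFinset.finite_toSet)
  intro S hS
  simp only [Finset.mem_coe, Multiset.mem_toFinset, Multiset.mem_powerset]
  rw [Multiset.le_iff_count]
  intro v
  by_cases hv : v ∈ S
  · have hvN : v ≤ N := hS.2 ▸ Multiset.single_le_sum (fun x _ => Nat.zero_le x) v hv
    have h1 : 1 ≤ Multiset.count v (Multiset.range (N+1)) := by
      rw [Nat.one_le_iff_ne_zero, Ne, Multiset.count_eq_zero, Multiset.mem_range]
      omega
    calc Multiset.count v S ≤ Multiset.card S := Multiset.count_le_card v S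
      _ = k * 1 := by rw [hS.1, mul_one]
      _ ≤ _ := by rw [Multiset.count_nsmul]; exact Nat.mul_le_mul_left k h1
  · simp [Multiset.count_eq_zero.2 hv]

lemma coeff_specH (k N : ℕ) : PowerSeries.coeff N (specH k) = ((Mset k N).ncard : ℤ) := by
  simp [specH, Mset]

lemma specH_zero : specH 0 = 1 := by
  ext N
  rw [coeff_specH, PowerSeries.coeff_one]
  rcases Nat.eq_zero_or_pos N with hN | hN
  · subst hN
    have : Mset 0 0 = {0} := by
      ext S; simp [Mset, Multiset.card_eq_zero]
      rintro rfl; simp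
    simp [this]
  · have : Mset 0 N = ∅ := by
      ext S; simp [Mset, Multiset.card_eq_zero]
      rintro rfl; simp; omega
    simp [this]
    omega

lemma card_le_sum_of_pos {S : Multiset ℕ} (h : (0:ℕ) ∉ S) : Multiset.card S ≤ S.sum := by
  induction S using Multiset.induction with
  | empty => simp
  | cons a s ih =>
    simp only [Multiset.card_cons, Multiset.sum_cons]
    have ha : a ≠ 0 := fun e => h (e ▸ Multiset.mem_cons_self a s)
    have := ih (fun hx => h (Multiset.mem_cons_of_mem hx))
    omega

lemma sum_map_add_one (T : Multiset ℕ) : (T.map (· + 1)).sum = T.sum + Multiset.card T := by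
  induction T using Multiset.induction with
  | empty => simp
  | cons a s ih => simp only [Multiset.map_cons, Multiset.sum_cons, Multiset.card_cons, ih]; omega

lemma map_sub_one_add_one {S : Multiset ℕ} (h0 : (0:ℕ) ∉ S) : (S.map (· - 1)).map (· + 1) = S := by
  rw [Multiset.map_map]
  calc S.map ((· + 1) ∘ (· - 1)) = S.map id :=
        Multiset.map_congr rfl (fun x hx => by
          have : x ≠ 0 := fun e => h0 (e ▸ hx)
          simp only [Function.comp_apply, id_eq]; omega)
    _ = S := Multiset.map_id S

lemma map_add_one_sub_one (T : Multiset ℕ) : (T.map (· + 1)).map (· - 1) = T := by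
  rw [Multiset.map_map]
  calc T.map ((· - 1) ∘ (· + 1)) = T.map id :=
        Multiset.map_congr rfl (fun x _ => by simp)
    _ = T := Multiset.map_id T

lemma sum_map_sub_one {S : Multiset ℕ} (h0 : (0:ℕ) ∉ S) :
    S.sum = (S.map (· - 1)).sum + Multiset.card S := by
  conv_lhs => rw [← map_sub_one_add_one h0]
  rw [sum_map_add_one, Multiset.card_map]

lemma sum_erase_zero {S : Multiset ℕ} (h0 : (0:ℕ) ∈ S) : (S.erase 0).sum = S.sum := by
  conv_rhs => rw [← Multiset.cons_erase h0]
  simp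

lemma specH_rec (k : ℕ) : specH (k+1) = specH k + X^(k+1) * specH (k+1) := by
  ext N
  rw [map_add, coeff_specH, coeff_specH, PowerSeries.coeff_X_pow_mul', coeff_specH]
  set A : Set (Multiset ℕ) := {S | S ∈ Mset (k+1) N ∧ (0:ℕ) ∈ S} with hA
  set B : Set (Multiset ℕ) := {S | S ∈ Mset (k+1) N ∧ (0:ℕ) ∉ S} with hB
  have hAfin : A.Finite := (Mset_finite (k+1) N).subset fun S hS => hS.1
  have hBfin : B.Finite := (Mset_finite (k+1) N).subset fun S hS => hS.1
  have hsplit : (Mset (k+1) N).ncard = A.ncard + B.ncard := by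
    rw [← Set.ncard_union_eq (by
        rw [Set.disjoint_left]; rintro S ⟨_, h0⟩ ⟨_, h0'⟩; exact h0' h0) hAfin hBfin]
    congr 1
    ext S
    constructor
    · intro hS; by_cases h0 : (0:ℕ) ∈ S
      · exact Or.inl ⟨hS, h0⟩
      · exact Or.inr ⟨hS, h0⟩
    · rintro (⟨hS, _⟩ | ⟨hS, _⟩) <;> exact hS
  have hAcard : A.ncard = (Mset k N).ncard := by
    have himg : (fun S : Multiset ℕ => S.erase 0) '' A = Mset k N := by
      ext T
      constructor
      · rintro ⟨S, ⟨⟨hc, hs⟩, h0⟩, rfl⟩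
        dsimp only
        constructor
        · rw [Multiset.card_erase_of_mem h0, hc]; rfl
        · rw [sum_erase_zero h0, hs]
      · rintro ⟨hc, hs⟩
        refine ⟨(0:ℕ) ::ₘ T, ⟨⟨by simp [hc], by simp [hs]⟩, Multiset.mem_cons_self _ _⟩, ?_⟩
        simp
    have hinj : Set.InjOn (fun S : Multiset ℕ => S.erase 0) A := by
      rintro S ⟨_, h0S⟩ T ⟨_, h0T⟩ h
      rw [← Multiset.cons_erase h0S, ← Multiset.cons_erase h0T]
      dsimp only at h
      rw [h]
    rw [← himg, Set.ncard_image_of_injOn hinj]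
  rcases le_or_gt (k+1) N with hN | hN
  · rw [if_pos hN]
    have hBcard : B.ncard = (Mset (k+1) (N - (k+1))).ncard := by
      have himg : (fun S : Multiset ℕ => S.map (· - 1)) '' B = Mset (k+1) (N-(k+1)) := by
        ext T
        constructor
        · rintro ⟨S, ⟨⟨hc, hs⟩, h0⟩, rfl⟩
          dsimp only
          have := sum_map_sub_one h0
          constructor
          · simp [hc]
          · omega
        · rintro ⟨hc, hs⟩
          refine ⟨T.map (· + 1), ⟨⟨by simp [hc], ?_⟩, ?_⟩, ?_⟩
          · rw [sum_map_add_one, hs, hc]; omega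
          · intro h0
            rcases Multiset.mem_map.1 h0 with ⟨x, _, hx⟩
            omega
          · exact map_add_one_sub_one T
      have hinj : Set.InjOn (fun S : Multiset ℕ => S.map (· - 1)) B := by
        rintro S ⟨_, h0S⟩ T ⟨_, h0T⟩ h
        dsimp only at h
        rw [← map_sub_one_add_one h0S, ← map_sub_one_add_one h0T, h]
      rw [← himg, Set.ncard_image_of_injOn hinj]
    rw [hsplit, hAcard, hBcard]
    push_cast
    ring
  · rw [if_neg (by omega)]
    have hB0 : B = ∅ := by
      ext S
      simp only [hB, Set.mem_setOf_eq, Set.mem_empty_iff_false, iff_false, not_and]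
      rintro ⟨hc, hs⟩ h0
      have := card_le_sum_of_pos h0
      omega
    rw [hsplit, hAcard, hB0]
    simp

lemma qfac_mul_specH (k : ℕ) : qfac k * specH k = 1 := by
  induction k with
  | zero => simp [qfac, specH_zero]
  | succ k ih =>
    have hrec : (1 - X^(k+1)) * specH (k+1) = specH k := by
      have h := specH_rec k
      linear_combination h
    rw [qfac, Finset.prod_range_succ, ← qfac]
    calc qfac k * (1 - X^(k+1)) * specH (k+1) = qfac k * ((1 - X^(k+1)) * specH (k+1)) := by ring
      _ = qfac k * specH k := by rw [hrec]
      _ = 1 := ih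

lemma constantCoeff_qfac (k : ℕ) : PowerSeries.constantCoeff (qfac k) = 1 := by
  rw [qfac, map_prod]
  apply Finset.prod_eq_one
  intro j _
  simp

/-! ### The correspondence μ ↦ α -/

noncomputable def Fmap (n : ℕ) (μ : Multiset ℕ) : ℕ →₀ ℕ :=
  Multiset.toFinsupp μ + Finsupp.single 0 (n - Multiset.card μ)

def vals (α : ℕ →₀ ℕ) : Multiset ℕ := Multiset.map α α.support.val

def wsum (α : ℕ →₀ ℕ) : ℕ := α.sum fun i a => i * a

lemma Fmap_zero (n : ℕ) {μ : Multiset ℕ} (h0 : (0:ℕ) ∉ μ) :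
    Fmap n μ 0 = n - Multiset.card μ := by
  simp [Fmap, Multiset.count_eq_zero.2 h0]

lemma Fmap_ne_zero (n : ℕ) (μ : Multiset ℕ) {i : ℕ} (hi : i ≠ 0) :
    Fmap n μ i = Multiset.count i μ := by
  simp [Fmap, Finsupp.single_eq_of_ne' (Ne.symm hi)]

lemma Fmap_support (n : ℕ) (μ : Multiset ℕ) :
    (Fmap n μ).support ⊆ insert 0 μ.toFinset := by
  intro i hi
  rcases eq_or_ne i 0 with rfl | hne
  · exact Finset.mem_insert_self _ _
  · rw [Finsupp.mem_support_iff, Fmap_ne_zero n μ hne] at hi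
    exact Finset.mem_insert_of_mem (Multiset.mem_toFinset.2
      (Multiset.count_pos.1 (Nat.pos_of_ne_zero hi)))

lemma erase_Fmap (n : ℕ) {μ : Multiset ℕ} (h0 : (0:ℕ) ∉ μ) :
    Finsupp.erase 0 (Fmap n μ) = Multiset.toFinsupp μ := by
  ext i
  rcases eq_or_ne i 0 with rfl | hne
  · rw [Finsupp.erase_same, Multiset.toFinsupp_apply, Multiset.count_eq_zero.2 h0]
  · rw [Finsupp.erase_ne hne, Fmap_ne_zero n μ hne, Multiset.toFinsupp_apply]

lemma Fmap_injOn (n : ℕ) : Set.InjOn (Fmap n) {μ | (0:ℕ) ∉ μ} := by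
  intro μ hμ ν hν h
  have := congrArg (fun β => Finsupp.toMultiset (Finsupp.erase 0 β)) h
  simpa [erase_Fmap n hμ, erase_Fmap n hν, Multiset.toFinsupp_toMultiset] using this

lemma zero_not_mem_vals (α : ℕ →₀ ℕ) : (0:ℕ) ∉ vals α := by
  intro h
  rcases Multiset.mem_map.1 h with ⟨i, hi, hαi⟩
  rw [Finset.mem_val, Finsupp.mem_support_iff] at hi
  exact hi hαi

lemma vals_sum (α : ℕ →₀ ℕ) : (vals α).sum = ∑ i ∈ α.support, α i :=
  (Finset.sum_eq_multiset_sum _ _).symm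

lemma sum_support_Fmap (n : ℕ) {μ : Multiset ℕ} (h0 : (0:ℕ) ∉ μ)
    (hcard : Multiset.card μ ≤ n) : ∑ i ∈ (Fmap n μ).support, Fmap n μ i = n := by
  rw [Finset.sum_subset (Fmap_support n μ)
    (fun i _ hi => by rwa [← Finsupp.notMem_support_iff])]
  have h0f : (0:ℕ) ∉ μ.toFinset := fun h => h0 (Multiset.mem_toFinset.1 h)
  rw [Finset.sum_insert h0f, Fmap_zero n h0,
    Finset.sum_congr rfl (fun i hi => Fmap_ne_zero n μ
      (fun e => h0f (e ▸ hi)))]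
  rw [Multiset.toFinset_sum_count_eq]
  omega

lemma wsum_Fmap (n : ℕ) {μ : Multiset ℕ} (h0 : (0:ℕ) ∉ μ) :
    wsum (Fmap n μ) = μ.sum := by
  rw [wsum, Finsupp.sum_of_support_subset _ (Fmap_support n μ) _ (fun i _ => mul_zero i)]
  have h0f : (0:ℕ) ∉ μ.toFinset := fun h => h0 (Multiset.mem_toFinset.1 h)
  rw [Finset.sum_insert h0f, zero_mul, zero_add,
    Finset.sum_congr rfl (fun i hi => by rw [Fmap_ne_zero n μ (fun e => h0f (e ▸ hi))])]
  have := Finset.sum_multiset_map_count μ (id : ℕ → ℕ)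
  simp only [id_eq, smul_eq_mul, Multiset.map_id'] at this
  rw [this]
  exact Finset.sum_congr rfl fun i _ => mul_comm _ _

/-! ### specHMulti and bpolInv as products over the support -/

lemma specHMulti_vals (α : ℕ →₀ ℕ) :
    specHMulti (vals α) = ∏ i ∈ α.support, specH (α i) := by
  rw [specHMulti, vals, Multiset.map_map, Finset.prod_eq_multiset_prod]
  rfl

lemma constantCoeff_bpol (n : ℕ) (μ : Multiset ℕ) :
    PowerSeries.constantCoeff (bpol n μ) = 1 := by
  rw [bpol, map_mul, constantCoeff_qfac, one_mul]
  rw [map_multiset_prod, Multiset.map_map]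
  apply Multiset.prod_eq_one
  intro x hx
  rcases Multiset.mem_map.1 hx with ⟨i, _, rfl⟩
  exact constantCoeff_qfac _

lemma bpol_eq_prod (n : ℕ) {μ : Multiset ℕ} (h0 : (0:ℕ) ∉ μ) :
    bpol n μ = ∏ i ∈ insert 0 μ.toFinset, qfac (Fmap n μ i) := by
  have h0f : (0:ℕ) ∉ μ.toFinset := fun h => h0 (Multiset.mem_toFinset.1 h)
  rw [Finset.prod_insert h0f, Fmap_zero n h0, bpol, ← Finset.prod_eq_multiset_prod]
  congr 1
  exact Finset.prod_congr rfl fun i hi => by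
    rw [Fmap_ne_zero n μ (fun e => h0f (e ▸ hi))]

lemma bpolInv_eq (n : ℕ) {μ : Multiset ℕ} (h0 : (0:ℕ) ∉ μ) :
    bpolInv n μ = specHMulti (vals (Fmap n μ)) := by
  have hprod : bpol n μ * specHMulti (vals (Fmap n μ)) = 1 := by
    rw [specHMulti_vals, bpol_eq_prod n h0,
      Finset.prod_subset (Fmap_support n μ) (fun i _ hi => by
        rw [Finsupp.notMem_support_iff.1 hi]; exact specH_zero),
      ← Finset.prod_mul_distrib]
    exact Finset.prod_eq_one fun i _ => qfac_mul_specH _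
  have hin : bpol n μ * bpolInv n μ = 1 :=
    PowerSeries.mul_invOfUnit (bpol n μ) 1 (by rw [constantCoeff_bpol]; rfl)
  calc bpolInv n μ = bpolInv n μ * (bpol n μ * specHMulti (vals (Fmap n μ))) := by
        rw [hprod, mul_one]
    _ = (bpol n μ * bpolInv n μ) * specHMulti (vals (Fmap n μ)) := by ring
    _ = specHMulti (vals (Fmap n μ)) := by rw [hin, one_mul]

/-! ### Finiteness -/

def Pm (n m : ℕ) : Set (Multiset ℕ) :=
  {μ | (0 : ℕ) ∉ μ ∧ Multiset.card μ ≤ n ∧ μ.sum = m}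

def Pn (n : ℕ) : Set (Multiset ℕ) := {lam | (0 : ℕ) ∉ lam ∧ lam.sum = n}

def Aset (lam : Multiset ℕ) (N : ℕ) : Set (ℕ →₀ ℕ) := {α | vals α = lam ∧ wsum α = N}

lemma Pn_finite (n : ℕ) : (Pn n).Finite := by
  apply Set.Finite.subset (Set.finite_range (fun p : Nat.Partition n => p.parts))
  rintro lam ⟨h0, hs⟩
  exact ⟨⟨lam, fun {i} hi => Nat.pos_of_ne_zero (fun e => h0 (e ▸ hi)), hs⟩, rfl⟩

lemma Pm_finite (n m : ℕ) : (Pm n m).Finite :=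
  (Pn_finite m).subset fun μ h => ⟨h.1, h.2.2⟩

lemma toMultiset_injective : Function.Injective (Finsupp.toMultiset (α := ℕ)) := by
  intro a b h
  have := congrArg Multiset.toFinsupp h
  rwa [Finsupp.toMultiset_toFinsupp, Finsupp.toMultiset_toFinsupp] at this

lemma sum_values (α : ℕ →₀ ℕ) : (α.sum fun _ a => a) = (vals α).sum := by
  rw [vals_sum]; rfl

lemma Aset_finite (lam : Multiset ℕ) (N : ℕ) : (Aset lam N).Finite := by
  apply Set.Finite.of_finite_image (f := Finsupp.toMultiset) _
    (toMultiset_injective.injOn)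
  apply Set.Finite.subset (Mset_finite lam.sum N)
  rintro T ⟨α, ⟨hv, hw⟩, rfl⟩
  constructor
  · rw [Finsupp.card_toMultiset]
    rw [show (α.sum fun _ => id) = (α.sum fun _ a => a) from rfl, sum_values, hv]
  · rw [Finsupp.sum_toMultiset]
    rw [Finsupp.sum_congr (g2 := fun i a => i * a) (fun x _ => by
      rw [smul_eq_mul, mul_comm])]
    exact hw

/-! ### The bijection -/

lemma sum_values_add (α β : ℕ →₀ ℕ) :
    ((α + β).sum fun _ a => a) = (α.sum fun _ a => a) + (β.sum fun _ a => a) :=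
  Finsupp.sum_add_index' (fun _ => rfl) (fun _ _ _ => rfl)

lemma wsum_add (α β : ℕ →₀ ℕ) : wsum (α + β) = wsum α + wsum β :=
  Finsupp.sum_add_index' (fun i => mul_zero i) (fun i b₁ b₂ => mul_add i b₁ b₂)

lemma sum_values_single (c : ℕ) : ((Finsupp.single 0 c).sum fun _ a => a) = c :=
  Finsupp.sum_single_index rfl

lemma wsum_single (c : ℕ) : wsum (Finsupp.single 0 c) = 0 := by
  rw [wsum, Finsupp.sum_single_index (mul_zero 0), zero_mul]

lemma Aset_eq (n m : ℕ) {lam : Multiset ℕ} (hsl : lam.sum = n) :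
    Aset lam m = Fmap n '' {μ | μ ∈ Pm n m ∧ vals (Fmap n μ) = lam} := by
  ext α
  constructor
  · rintro ⟨hv, hw⟩
    set β := Finsupp.erase 0 α with hβ
    have hdec : Finsupp.single 0 (α 0) + β = α := Finsupp.single_add_erase 0 α
    set μ := Finsupp.toMultiset β with hμ
    have htf : Multiset.toFinsupp μ = β := Finsupp.toMultiset_toFinsupp β
    have hcount : ∀ i, Multiset.count i μ = β i := by
      intro i; rw [← Multiset.toFinsupp_apply, htf]
    have h0μ : (0:ℕ) ∉ μ := by
      rw [← Multiset.count_pos, hcount, hβ, Finsupp.erase_same] at *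
      omega
    have hsv : (α.sum fun _ a => a) = n := by rw [sum_values, hv, hsl]
    have hsvβ : (β.sum fun _ a => a) = n - α 0 ∧ α 0 ≤ n := by
      have := sum_values_add (Finsupp.single 0 (α 0)) β
      rw [hdec, sum_values_single, hsv] at this
      omega
    have hcard : Multiset.card μ = n - α 0 := by
      rw [hμ, Finsupp.card_toMultiset]
      exact hsvβ.1
    have hwβ : wsum β = m := by
      have := wsum_add (Finsupp.single 0 (α 0)) β
      rw [hdec, wsum_single, zero_add] at this
      rw [← this, hw]
    have hsum : μ.sum = m := by
      rw [hμ, Finsupp.sum_toMultiset,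
        Finsupp.sum_congr (g2 := fun i a => i * a) (fun x _ => by
          rw [smul_eq_mul, mul_comm])]
      exact hwβ
    have hF : Fmap n μ = α := by
      rw [Fmap, htf, hcard, show n - (n - α 0) = α 0 by omega]
      rw [add_comm]
      exact hdec
    exact ⟨μ, ⟨⟨h0μ, by omega, hsum⟩, by rw [hF]; exact hv⟩, hF⟩
  · rintro ⟨μ, ⟨⟨h0, hc, hs⟩, hvF⟩, rfl⟩
    exact ⟨hvF, by rw [wsum_Fmap n h0, hs]⟩

/-! ### Main theorem (internal version) -/

theorem main' (n : ℕ) :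
    (PowerSeries.mk fun m => ∑ᶠ μ ∈ Pm n m, bpolInv n μ)
      = (∑ᶠ lam ∈ Pn n,
          (PowerSeries.map (Int.castRingHom (PowerSeries ℤ)) (specM lam)) *
            PowerSeries.C (R := PowerSeries ℤ) (specHMulti lam)) := by
  classical
  rw [← (Pn_finite n).coe_toFinset, finsum_mem_coe_finset]
  refine PowerSeries.ext fun m => ?_
  rw [PowerSeries.coeff_mk, ← (Pm_finite n m).coe_toFinset, finsum_mem_coe_finset, map_sum]
  set P := (Pm_finite n m).toFinset with hP
  set L := (Pn_finite n).toFinset with hL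
  have hmem : ∀ μ ∈ P, μ ∈ Pm n m := fun μ h => ((Pm_finite n m).mem_toFinset).1 h
  have hmapsto : ∀ μ ∈ P, vals (Fmap n μ) ∈ L := by
    intro μ hμ
    obtain ⟨h0, hc, hs⟩ := hmem μ hμ
    rw [hL, (Pn_finite n).mem_toFinset]
    exact ⟨zero_not_mem_vals _, by rw [vals_sum, sum_support_Fmap n h0 hc]⟩
  have hterm : ∀ lam ∈ L, (PowerSeries.coeff (R := PowerSeries ℤ) m)
      ((PowerSeries.map (Int.castRingHom (PowerSeries ℤ)) (specM lam)) *
        PowerSeries.C (R := PowerSeries ℤ) (specHMulti lam))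
      = ((Aset lam m).ncard : PowerSeries ℤ) * specHMulti lam := by
    intro lam _
    rw [PowerSeries.coeff_mul_C, PowerSeries.coeff_map]
    congr 1
    rw [show (PowerSeries.coeff m) (specM lam) = ((Aset lam m).ncard : ℤ) by
      simp [specM, Aset, vals, wsum]]
    push_cast
    rfl
  rw [Finset.sum_congr rfl hterm]
  calc ∑ μ ∈ P, bpolInv n μ
      = ∑ μ ∈ P, specHMulti (vals (Fmap n μ)) :=
        Finset.sum_congr rfl fun μ hμ => bpolInv_eq n (hmem μ hμ).1
    _ = ∑ lam ∈ L, ∑ μ ∈ P.filter (fun μ => vals (Fmap n μ) = lam),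
          specHMulti (vals (Fmap n μ)) :=
        (Finset.sum_fiberwise_of_maps_to hmapsto _).symm
    _ = ∑ lam ∈ L, ((Aset lam m).ncard : PowerSeries ℤ) * specHMulti lam := by
        apply Finset.sum_congr rfl
        intro lam hlam
        have hLlam : lam ∈ Pn n := ((Pn_finite n).mem_toFinset).1 hlam
        have hsetcoe : (↑(P.filter (fun μ => vals (Fmap n μ) = lam)) : Set (Multiset ℕ))
            = {μ | μ ∈ Pm n m ∧ vals (Fmap n μ) = lam} := by
          ext μ
          simp only [Finset.coe_filter, Set.mem_setOf_eq, hP, (Pm_finite n m).mem_toFinset]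
        have hcard : (Aset lam m).ncard = (P.filter (fun μ => vals (Fmap n μ) = lam)).card := by
          rw [Aset_eq n m hLlam.2, ← hsetcoe,
            Set.ncard_image_of_injOn ((Fmap_injOn n).mono (fun μ hμ => by
              rw [hsetcoe] at hμ
              exact hμ.1.1)),
            Set.ncard_coe_finset]
        rw [Finset.sum_congr rfl (fun μ hμ => by
            rw [(Finset.mem_filter.1 hμ).2]),
          Finset.sum_const, hcard, nsmul_eq_mul]
    _ = _ := rfl

/-- `Σ_{μ : ℓ(μ) ≤ n} z₂^{|μ|} b_{μ,n}(z₁)⁻¹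
      = Σ_{λ : |λ| = n} m_λ(1,z₂,z₂²,...) h_λ(1,z₁,z₁²,...)`,
as power series in `z₂` with coefficients in `ℤ[[z₁]]`. -/
theorem sum_bpolInv_eq_cauchy_specialization (n : ℕ) :
    (PowerSeries.mk fun m => ∑ᶠ μ ∈ {μ : Multiset ℕ |
        (0 : ℕ) ∉ μ ∧ Multiset.card μ ≤ n ∧ μ.sum = m}, bpolInv n μ)
      = (∑ᶠ lam ∈ {lam : Multiset ℕ | (0 : ℕ) ∉ lam ∧ lam.sum = n},
          (PowerSeries.map (Int.castRingHom (PowerSeries ℤ)) (specM lam)) *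
            PowerSeries.C (R := PowerSeries ℤ) (specHMulti lam)) := by
  exact main' n
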